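/- Let a, b, m > 0 be reals, and p, q : ℕ → ℝ increasing functions with p(n)/n^m → a and q(n)/n^m → b. Set h_n = 1/p(n), k_n = 1/q(n). Let f satisfy f(0) = 0, f(h_n)/h_n → R, f(−k_n)/(−k_n) → L with R, L real. Then every real number K between L and R is a sequential cord derivative of f at 0, i.e., there exist subsequences h_{i_n}, k_{j_n} with (f(h_{i_n}) − f(−k_{j_n}))/(h_{i_n} + k_{j_n}) → K. -/

import Mathlib

open Filter Topology

-- p n / n^m → a > 0  implies p → ∞
lemma aux_p_atTop (p : ℕ → ℝ) (a m : ℝ) (ha : 0 < a) (hm : 0 < m)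
    (hpa : Tendsto (fun n => p n / (n : ℝ) ^ m) atTop (𝓝 a)) :
    Tendsto p atTop atTop := by
  have hpow : Tendsto (fun n : ℕ => (n : ℝ) ^ m) atTop atTop :=
    (tendsto_rpow_atTop hm).comp tendsto_natCast_atTop_atTop
  have := hpa.pos_mul_atTop ha hpow
  refine this.congr' ?_
  filter_upwards [eventually_ge_atTop 1] with n hn
  have hn0 : (0:ℝ) < (n:ℝ) ^ m := Real.rpow_pos_of_pos (by exact_mod_cast hn) m
  field_simp

lemma ratio_tendsto (p q : ℕ → ℝ) (a b m : ℝ) (ha : 0 < a) (hm : 0 < m)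
    (hpa : Tendsto (fun n => p n / (n : ℝ) ^ m) atTop (𝓝 a))
    (hqb : Tendsto (fun n => q n / (n : ℝ) ^ m) atTop (𝓝 b))
    (i j : ℕ → ℕ) (hi : Tendsto i atTop atTop) (hj : Tendsto j atTop atTop)
    (c : ℝ) (hratio : Tendsto (fun n => (j n : ℝ) / (i n : ℝ)) atTop (𝓝 c)) :
    Tendsto (fun n => q (j n) / p (i n)) atTop (𝓝 (b * c ^ m * a⁻¹)) := by
  have h1 : Tendsto (fun n => q (j n) / (j n : ℝ) ^ m) atTop (𝓝 b) := hqb.comp hj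
  have h3 : Tendsto (fun n => ((i n : ℝ) ^ m) / p (i n)) atTop (𝓝 a⁻¹) := by
    have := (hpa.comp hi).inv₀ ha.ne'
    simpa [inv_div] using this
  have h2 : Tendsto (fun n => ((j n : ℝ) ^ m) / ((i n : ℝ) ^ m)) atTop (𝓝 (c ^ m)) := by
    have := hratio.rpow_const (Or.inr hm.le)
    refine this.congr (fun n => ?_)
    exact Real.div_rpow (Nat.cast_nonneg _) (Nat.cast_nonneg _) m
  have hmain := (h1.mul h2).mul h3
  refine hmain.congr' ?_
  filter_upwards [hi.eventually (eventually_ge_atTop 1), hj.eventually (eventually_ge_atTop 1)]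
    with n hin hjn
  have hjr : ((j n : ℝ)) ^ m ≠ 0 :=
    (Real.rpow_pos_of_pos (by exact_mod_cast hjn) m).ne'
  have hir : ((i n : ℝ)) ^ m ≠ 0 :=
    (Real.rpow_pos_of_pos (by exact_mod_cast hin) m).ne'
  field_simp

lemma key (p q : ℕ → ℝ) (f : ℝ → ℝ) (R L t : ℝ) (ht : 0 ≤ t)
    (hpt : Tendsto p atTop atTop) (hqt : Tendsto q atTop atTop)
    (hR : Tendsto (fun n => f (1 / p n) / (1 / p n)) atTop (𝓝 R))
    (hL : Tendsto (fun n => f (-(1 / q n)) / (-(1 / q n))) atTop (𝓝 L))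
    (i j : ℕ → ℕ) (hi : Tendsto i atTop atTop) (hj : Tendsto j atTop atTop)
    (hrat : Tendsto (fun n => q (j n) / p (i n)) atTop (𝓝 t)) :
    Tendsto (fun n => (f (1 / p (i n)) - f (-(1 / q (j n)))) / (1 / p (i n) + 1 / q (j n)))
      atTop (𝓝 ((R * t + L) / (t + 1))) := by
  have hRi : Tendsto (fun n => f (1 / p (i n)) / (1 / p (i n))) atTop (𝓝 R) := hR.comp hi
  have hLj : Tendsto (fun n => f (-(1 / q (j n))) / (-(1 / q (j n)))) atTop (𝓝 L) := hL.comp hj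
  have hden : (t + 1) ≠ 0 := by linarith
  have hmain : Tendsto (fun n =>
      (f (1 / p (i n)) / (1 / p (i n)) * (q (j n) / p (i n))
        + f (-(1 / q (j n))) / (-(1 / q (j n)))) / (q (j n) / p (i n) + 1))
      atTop (𝓝 ((R * t + L) / (t + 1))) :=
    ((hRi.mul hrat).add hLj).div (hrat.add tendsto_const_nhds) hden
  refine hmain.congr' ?_
  filter_upwards [(hpt.comp hi).eventually (eventually_gt_atTop 0),
    (hqt.comp hj).eventually (eventually_gt_atTop 0)] with n hP hQ
  have hP' : 0 < p (i n) := hP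
  have hQ' : 0 < q (j n) := hQ
  have h1 : (0:ℝ) < 1 / p (i n) + 1 / q (j n) := by positivity
  have h2 : (0:ℝ) < q (j n) / p (i n) + 1 := by positivity
  set x := f (1 / p (i n)) with hx
  set y := f (-(1 / q (j n))) with hy
  have e : y / (-(1 / q (j n))) = -(y * q (j n)) := by field_simp
  rw [e, div_eq_div_iff h2.ne' h1.ne']
  field_simp
  ring

lemma key' (p q : ℕ → ℝ) (f : ℝ → ℝ) (R L s : ℝ) (hs : 0 ≤ s)
    (hpt : Tendsto p atTop atTop) (hqt : Tendsto q atTop atTop)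
    (hR : Tendsto (fun n => f (1 / p n) / (1 / p n)) atTop (𝓝 R))
    (hL : Tendsto (fun n => f (-(1 / q n)) / (-(1 / q n))) atTop (𝓝 L))
    (i j : ℕ → ℕ) (hi : Tendsto i atTop atTop) (hj : Tendsto j atTop atTop)
    (hrat : Tendsto (fun n => p (i n) / q (j n)) atTop (𝓝 s)) :
    Tendsto (fun n => (f (1 / p (i n)) - f (-(1 / q (j n)))) / (1 / p (i n) + 1 / q (j n)))
      atTop (𝓝 ((R + L * s) / (1 + s))) := by
  have hRi : Tendsto (fun n => f (1 / p (i n)) / (1 / p (i n))) atTop (𝓝 R) := hR.comp hi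
  have hLj : Tendsto (fun n => f (-(1 / q (j n))) / (-(1 / q (j n)))) atTop (𝓝 L) := hL.comp hj
  have hden : (1 + s) ≠ 0 := by linarith
  have hmain : Tendsto (fun n =>
      (f (1 / p (i n)) / (1 / p (i n))
        + f (-(1 / q (j n))) / (-(1 / q (j n))) * (p (i n) / q (j n)))
        / (1 + p (i n) / q (j n)))
      atTop (𝓝 ((R + L * s) / (1 + s))) :=
    (hRi.add (hLj.mul hrat)).div (tendsto_const_nhds.add hrat) hden
  refine hmain.congr' ?_
  filter_upwards [(hpt.comp hi).eventually (eventually_gt_atTop 0),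
    (hqt.comp hj).eventually (eventually_gt_atTop 0)] with n hP hQ
  have hP' : 0 < p (i n) := hP
  have hQ' : 0 < q (j n) := hQ
  have h1 : (0:ℝ) < 1 / p (i n) + 1 / q (j n) := by positivity
  have h2 : (0:ℝ) < 1 + p (i n) / q (j n) := by positivity
  set x := f (1 / p (i n)) with hx
  set y := f (-(1 / q (j n))) with hy
  have e : y / (-(1 / q (j n))) = -(y * q (j n)) := by field_simp
  rw [e, div_eq_div_iff h2.ne' h1.ne']
  field_simp
  ring

lemma ceil_ratio (β : ℝ) (hβ : 0 ≤ β) :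
    Tendsto (fun n : ℕ => (⌈β * n⌉₊ : ℝ) / n) atTop (𝓝 β) := by
  have hupper : Tendsto (fun n : ℕ => β + 1 / (n : ℝ)) atTop (𝓝 β) := by
    simpa using tendsto_const_nhds.add (tendsto_one_div_atTop_nhds_zero_nat : Tendsto (fun n : ℕ => 1 / (n : ℝ)) atTop (𝓝 0))
  refine tendsto_of_tendsto_of_tendsto_of_le_of_le' tendsto_const_nhds hupper ?_ ?_
  · filter_upwards [eventually_ge_atTop 1] with n hn
    have hn0 : (0:ℝ) < n := by exact_mod_cast hn
    rw [le_div_iff₀ hn0]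
    exact Nat.le_ceil _
  · filter_upwards [eventually_ge_atTop 1] with n hn
    have hn0 : (0:ℝ) < n := by exact_mod_cast hn
    rw [div_le_iff₀ hn0]
    have := (Nat.ceil_lt_add_one (mul_nonneg hβ n.cast_nonneg)).le
    calc (⌈β * n⌉₊ : ℝ) ≤ β * n + 1 := this
    _ ≤ (β + 1/n) * n := by field_simp; exact le_refl _
    
lemma ceil_strictMono (α : ℝ) (hα : 1 ≤ α) : StrictMono fun n : ℕ => ⌈α * n⌉₊ := by
  apply strictMono_nat_of_lt_succ
  intro n
  have h0 : (0:ℝ) ≤ α * n := mul_nonneg (by linarith) n.cast_nonneg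
  have h1 : (⌈α * n⌉₊ : ℝ) < α * n + 1 := Nat.ceil_lt_add_one h0
  have h2 : α * n + 1 ≤ α * (n + 1) := by nlinarith
  have h3 : (⌈α * n⌉₊ : ℝ) < (⌈α * (n+1 : ℕ)⌉₊ : ℝ) := by
    calc (⌈α * n⌉₊ : ℝ) < α * n + 1 := h1
    _ ≤ α * (n+1:ℕ) := by push_cast; linarith
    _ ≤ ⌈α * (n+1:ℕ)⌉₊ := Nat.le_ceil _
  exact_mod_cast h3

lemma sq_ratio : Tendsto (fun n : ℕ => ((n : ℝ)) / ((((n+1)^2 : ℕ)) : ℝ)) atTop (𝓝 0) := by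
  have hupper : Tendsto (fun n : ℕ => 1 / ((n : ℝ) + 1)) atTop (𝓝 0) :=
    tendsto_one_div_add_atTop_nhds_zero_nat
  refine tendsto_of_tendsto_of_tendsto_of_le_of_le' tendsto_const_nhds hupper ?_ ?_
  · filter_upwards with n
    positivity
  · filter_upwards with n
    have h1 : (0:ℝ) < (n:ℝ) + 1 := by positivity
    push_cast
    rw [div_le_div_iff₀ (by positivity) h1]
    nlinarith

theorem poly_decay_all_cord_derivs (a b m : ℝ) (ha : 0 < a) (hb : 0 < b) (hm : 0 < m)
    (p q : ℕ → ℝ) (hp : StrictMono p) (hq : StrictMono q)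
    (hpa : Tendsto (fun n => p n / (n : ℝ) ^ m) atTop (𝓝 a))
    (hqb : Tendsto (fun n => q n / (n : ℝ) ^ m) atTop (𝓝 b))
    (f : ℝ → ℝ) (R L : ℝ) (hf0 : f 0 = 0)
    (hR : Tendsto (fun n => f (1 / p n) / (1 / p n)) atTop (𝓝 R))
    (hL : Tendsto (fun n => f (-(1 / q n)) / (-(1 / q n))) atTop (𝓝 L))
    (K : ℝ) (hK1 : min L R ≤ K) (hK2 : K ≤ max L R) :
    ∃ i j : ℕ → ℕ, StrictMono i ∧ StrictMono j ∧
      Tendsto (fun n => (f (1 / p (i n)) - f (-(1 / q (j n)))) / (1 / p (i n) + 1 / q (j n)))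
        atTop (𝓝 K) := by
  have hpt : Tendsto p atTop atTop := aux_p_atTop p a m ha hm hpa
  have hqt : Tendsto q atTop atTop := aux_p_atTop q b m hb hm hqb
  have hsqmono : StrictMono (fun n : ℕ => (n+1)^2) := by
    intro x y h
    simpa using Nat.pow_lt_pow_left (by omega) (two_ne_zero)
  by_cases hLR : L = R
  · -- then K = R; use identity subsequences
    have hKR : K = R := by
      rw [hLR] at hK1 hK2; simp at hK1 hK2; linarith
    refine ⟨id, id, strictMono_id, strictMono_id, ?_⟩
    have hratio : Tendsto (fun n : ℕ => ((id n : ℕ) : ℝ) / ((id n : ℕ) : ℝ)) atTop (𝓝 1) := by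
      refine tendsto_const_nhds.congr' ?_
      filter_upwards [eventually_ge_atTop 1] with n hn
      have h0 : ((n : ℝ)) ≠ 0 := by
        have : (0:ℝ) < n := by exact_mod_cast hn
        exact this.ne'
      simp [div_self h0]
    have hrat := ratio_tendsto p q a b m ha hm hpa hqb id id tendsto_id tendsto_id 1 hratio
    rw [Real.one_rpow] at hrat
    have ht0 : (0:ℝ) ≤ b * 1 * a⁻¹ := by positivity
    have h := key p q f R L (b * 1 * a⁻¹) ht0 hpt hqt hR hL id id tendsto_id tendsto_id hrat
    have hval : (R * (b * 1 * a⁻¹) + L) / (b * 1 * a⁻¹ + 1) = K := by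
      rw [hLR, hKR]
      have hd : b * 1 * a⁻¹ + 1 ≠ 0 := by positivity
      field_simp
    rwa [hval] at h
  · by_cases hKL : K = L
    · -- t = 0 : p-index grows much faster
      refine ⟨fun n => (n+1)^2, id, hsqmono, strictMono_id, ?_⟩
      have hratio : Tendsto (fun n : ℕ => ((id n : ℕ) : ℝ) / ((((fun n : ℕ => (n+1)^2) n) : ℕ) : ℝ))
          atTop (𝓝 0) := sq_ratio
      have hrat := ratio_tendsto p q a b m ha hm hpa hqb (fun n => (n+1)^2) id
        hsqmono.tendsto_atTop tendsto_id 0 hratio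
      rw [Real.zero_rpow hm.ne'] at hrat
      simp only [mul_zero, zero_mul] at hrat
      have h := key p q f R L 0 le_rfl hpt hqt hR hL (fun n => (n+1)^2) id
        hsqmono.tendsto_atTop tendsto_id hrat
      have hval : (R * 0 + L) / (0 + 1) = K := by rw [hKL]; ring
      rwa [hval] at h
    · by_cases hKR : K = R
      · -- s = 0 : q-index grows much faster
        refine ⟨id, fun n => (n+1)^2, strictMono_id, hsqmono, ?_⟩
        have hratio : Tendsto (fun n : ℕ => ((id n : ℕ) : ℝ) / ((((fun n : ℕ => (n+1)^2) n) : ℕ) : ℝ))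
            atTop (𝓝 0) := sq_ratio
        have hrat := ratio_tendsto q p b a m hb hm hqb hpa (fun n => (n+1)^2) id
          hsqmono.tendsto_atTop tendsto_id 0 hratio
        rw [Real.zero_rpow hm.ne'] at hrat
        simp only [mul_zero, zero_mul] at hrat
        have h := key' p q f R L 0 le_rfl hpt hqt hR hL id (fun n => (n+1)^2)
          tendsto_id hsqmono.tendsto_atTop hrat
        have hval : (R + L * 0) / (1 + 0) = K := by rw [hKR]; ring
        rwa [hval] at h
      · -- K strictly between L and R
        set t : ℝ := (K - L) / (R - K) with htdef
        have hRK : R - K ≠ 0 := sub_ne_zero.mpr (fun h => hKR h.symm)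
        have hKLne : K - L ≠ 0 := sub_ne_zero.mpr hKL
        have ht : 0 < t := by
          rcases le_or_gt L R with hcase | hcase
          · have h1 : min L R = L := min_eq_left hcase
            have h2 : max L R = R := max_eq_right hcase
            rw [h1] at hK1; rw [h2] at hK2
            have : L < K := lt_of_le_of_ne hK1 (fun h => hKL h.symm)
            have : K < R := lt_of_le_of_ne hK2 hKR
            apply div_pos <;> linarith [lt_of_le_of_ne hK1 (fun h => hKL h.symm)]
          · have h1 : min L R = R := min_eq_right hcase.le
            have h2 : max L R = L := max_eq_left hcase.le
            rw [h1] at hK1; rw [h2] at hK2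
            have hRK' : R < K := lt_of_le_of_ne hK1 (fun h => hKR h.symm)
            have hKL' : K < L := lt_of_le_of_ne hK2 hKL
            have : t = (L - K) / (K - R) := by
              rw [htdef]
              rw [div_eq_div_iff hRK (by linarith : K - R ≠ 0)]
              ring
            rw [this]
            apply div_pos <;> linarith
        set c : ℝ := (t * a / b) ^ (1/m) with hcdef
        have hc : 0 < c := Real.rpow_pos_of_pos (by positivity) _
        have hcm : c ^ m = t * a / b := by
          rw [hcdef, ← Real.rpow_mul (by positivity), one_div,
            inv_mul_cancel₀ hm.ne', Real.rpow_one]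
        set α : ℝ := max 1 c⁻¹ with hαdef
        set β : ℝ := c * α with hβdef
        have hα1 : 1 ≤ α := le_max_left _ _
        have hα0 : (0:ℝ) < α := by linarith
        have hβ1 : 1 ≤ β := by
          have h1 : c * c⁻¹ ≤ c * α := by
            apply mul_le_mul_of_nonneg_left (le_max_right _ _) hc.le
          rw [mul_inv_cancel₀ hc.ne'] at h1
          exact h1
        refine ⟨fun n => ⌈α * n⌉₊, fun n => ⌈β * n⌉₊, ceil_strictMono α hα1,
          ceil_strictMono β hβ1, ?_⟩
        have hi : Tendsto (fun n : ℕ => ⌈α * n⌉₊) atTop atTop := (ceil_strictMono α hα1).tendsto_atTop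
        have hj : Tendsto (fun n : ℕ => ⌈β * n⌉₊) atTop atTop := (ceil_strictMono β hβ1).tendsto_atTop
        have hratio : Tendsto (fun n : ℕ => ((⌈β * n⌉₊ : ℕ) : ℝ) / ((⌈α * n⌉₊ : ℕ) : ℝ))
            atTop (𝓝 c) := by
          have hd := (ceil_ratio β (by linarith)).div (ceil_ratio α (by linarith))
            (by positivity : α ≠ 0)
          have hβα : β / α = c := by rw [hβdef, mul_div_assoc, div_self hα0.ne', mul_one]
          rw [hβα] at hd
          refine hd.congr' ?_
          filter_upwards [eventually_ge_atTop 1] with n hn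
          have hn0 : ((n:ℝ)) ≠ 0 := by
            have : (0:ℝ) < n := by exact_mod_cast hn
            exact this.ne'
          have hα0' : ((⌈α * n⌉₊ : ℕ) : ℝ) ≠ 0 := by
            have h1 : (1:ℝ) ≤ α * n := by
              have : (1:ℝ) ≤ (n:ℝ) := by exact_mod_cast hn
              nlinarith
            have : (1:ℝ) ≤ (⌈α * n⌉₊ : ℕ) := le_trans h1 (Nat.le_ceil _)
            linarith
          simp only [Pi.div_apply]
          field_simp
        have hrat := ratio_tendsto p q a b m ha hm hpa hqb _ _ hi hj c hratio
        have hval : b * c ^ m * a⁻¹ = t := by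
          rw [hcm]; field_simp
        rw [hval] at hrat
        have h := key p q f R L t ht.le hpt hqt hR hL _ _ hi hj hrat
        have hfin : (R * t + L) / (t + 1) = K := by
          have ht1 : t + 1 ≠ 0 := by positivity
          rw [div_eq_iff ht1, htdef]
          field_simp
          ring
        rwa [hfin] at h
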